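/- arXiv:2404.12556 — 4 statements merged into one kernel-verified Lean document; each statement's English description precedes it below -/
import Mathlib

section
/- If δ is a random variable with E[δ] = 0 and |δ| ≤ u < 1 almost surely, then |E[log(1+δ)]| ≤ u²/(1-u). -/
open MeasureTheory

lemma log_one_add_sub_bound (u x : ℝ) (hu1 : u < 1) (hx : |x| ≤ u) :
    |Real.log (1 + x) - x| ≤ u ^ 2 / (1 - u) := by
  have hxl : -u ≤ x := (abs_le.mp hx).1
  have hxu : x ≤ u := (abs_le.mp hx).2
  have h1 : (0:ℝ) < 1 - u := by linarith
  have h2 : (0:ℝ) < 1 + x := by linarith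
  have hup : Real.log (1 + x) ≤ x := by
    have := Real.log_le_sub_one_of_pos h2
    linarith
  have hlow : x / (1 + x) ≤ Real.log (1 + x) := by
    have h3 : (0:ℝ) < (1 + x)⁻¹ := by positivity
    have := Real.log_le_sub_one_of_pos h3
    rw [Real.log_inv] at this
    have hfield : (1 + x)⁻¹ - 1 = -(x / (1 + x)) := by
      field_simp; ring
    rw [hfield] at this
    linarith
  have key : x - Real.log (1 + x) ≤ x ^ 2 / (1 + x) := by
    have : x - x / (1 + x) = x ^ 2 / (1 + x) := by
      field_simp; ring
    linarith
  have hle : x ^ 2 / (1 + x) ≤ u ^ 2 / (1 - u) := by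
    apply div_le_div₀ (by positivity) _ h1 (by linarith)
    have := sq_abs x
    nlinarith [sq_nonneg (|x| + u)]
  rw [abs_sub_comm, abs_of_nonneg (by linarith)]
  linarith

/-- If `E[δ] = 0` and `|δ| ≤ u < 1` a.s., then `|E[log(1+δ)]| ≤ u²/(1-u)`. -/
theorem abs_integral_log_one_add_le {Ω : Type*} [MeasurableSpace Ω]
    (P : Measure Ω) [IsProbabilityMeasure P] (u : ℝ) (hu0 : 0 < u) (hu1 : u < 1)
    (δ : Ω → ℝ) (hmeas : Measurable δ) (hmean : ∫ ω, δ ω ∂P = 0)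
    (hbd : ∀ᵐ ω ∂P, |δ ω| ≤ u) :
    |∫ ω, Real.log (1 + δ ω) ∂P| ≤ u ^ 2 / (1 - u) := by
  have hδint : Integrable δ P := by
    apply Integrable.mono' (integrable_const u) hmeas.aestronglyMeasurable
    filter_upwards [hbd] with ω h using h
  have hgmeas : Measurable fun ω => Real.log (1 + δ ω) - δ ω :=
    (Real.measurable_log.comp (measurable_const.add hmeas)).sub hmeas
  have hgbd : ∀ᵐ ω ∂P, ‖Real.log (1 + δ ω) - δ ω‖ ≤ u ^ 2 / (1 - u) := by
    filter_upwards [hbd] with ω h using log_one_add_sub_bound u (δ ω) hu1 h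
  have hgint : Integrable (fun ω => Real.log (1 + δ ω) - δ ω) P := by
    apply Integrable.mono' (integrable_const (u ^ 2 / (1 - u)))
      hgmeas.aestronglyMeasurable hgbd
  have hlogint : Integrable (fun ω => Real.log (1 + δ ω)) P := by
    have : (fun ω => Real.log (1 + δ ω)) =
        (fun ω => Real.log (1 + δ ω) - δ ω) + δ := by
      funext ω; simp
    rw [this]; exact hgint.add hδint
  have heq : ∫ ω, Real.log (1 + δ ω) ∂P
      = ∫ ω, (Real.log (1 + δ ω) - δ ω) ∂P := by
    rw [integral_sub hlogint hδint, hmean, sub_zero]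
  rw [heq]
  calc |∫ ω, (Real.log (1 + δ ω) - δ ω) ∂P|
      ≤ u ^ 2 / (1 - u) * (P Set.univ).toReal :=
        norm_integral_le_of_norm_le_const hgbd
    _ = u ^ 2 / (1 - u) := by simp
end

section
/- If δ is uniformly distributed on [-u, u] with 0 < u < 1, then Var[log(1+δ)] = (4u² + (u²-1)·[log²(1-u) - 2·log(1-u)·log(1+u) + log²(1+u)]) / (4u²). -/
open Real

/-- For `δ ~ Uniform[-u,u]` with `0 < u < 1`, the variance of `log(1+δ)`,
computed as `E[X²] - (E[X])²` with expectations as integrals against the uniform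
density `1/(2u)` on `[-u,u]`, equals
`(4u² + (u²-1)·[log²(1-u) - 2 log(1-u) log(1+u) + log²(1+u)]) / (4u²)`. -/
theorem uniform_var_log_one_add (u : ℝ) (hu0 : 0 < u) (hu1 : u < 1) :
    (1 / (2 * u)) * (∫ x in (-u)..u, (Real.log (1 + x)) ^ 2) -
      ((1 / (2 * u)) * (∫ x in (-u)..u, Real.log (1 + x))) ^ 2 =
      (4 * u ^ 2 + (u ^ 2 - 1) *
        ((Real.log (1 - u)) ^ 2 - 2 * Real.log (1 - u) * Real.log (1 + u) +
          (Real.log (1 + u)) ^ 2)) / (4 * u ^ 2) := by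
  have huu : -u ≤ u := by linarith
  have hpos : ∀ x ∈ Set.uIcc (-u) u, (0:ℝ) < 1 + x := by
    intro x hx
    rw [Set.uIcc_of_le huu] at hx
    linarith [hx.1]
  have hcont : ContinuousOn (fun x : ℝ => Real.log (1 + x)) (Set.uIcc (-u) u) := by
    intro x hx
    exact ((Real.continuousAt_log (by linarith [hpos x hx])).comp
      (by continuity : Continuous fun x : ℝ => 1 + x).continuousAt).continuousWithinAt
  have h1 : (∫ x in (-u)..u, Real.log (1 + x)) =
      ((1 + u) * Real.log (1 + u) - (1 + u)) -
        ((1 + -u) * Real.log (1 + -u) - (1 + -u)) := by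
    apply intervalIntegral.integral_eq_sub_of_hasDerivAt
    · intro x hx
      have h0 : (0:ℝ) < 1 + x := hpos x hx
      have hd1 : HasDerivAt (fun x : ℝ => 1 + x) 1 x := by
        simpa using (hasDerivAt_id x).const_add 1
      have hlog : HasDerivAt (fun x : ℝ => Real.log (1 + x)) (1 / (1 + x)) x := by
        exact ((Real.hasDerivAt_log h0.ne').comp x hd1).congr_deriv (by ring)
      have := (hd1.mul hlog).sub hd1
      convert this using 1
      · rfl
      field_simp
      ring
    · exact hcont.intervalIntegrable
  have h2 : (∫ x in (-u)..u, (Real.log (1 + x)) ^ 2) =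
      ((1 + u) * (Real.log (1 + u)) ^ 2 - 2 * (1 + u) * Real.log (1 + u) + 2 * (1 + u)) -
        ((1 + -u) * (Real.log (1 + -u)) ^ 2 - 2 * (1 + -u) * Real.log (1 + -u) + 2 * (1 + -u)) := by
    apply intervalIntegral.integral_eq_sub_of_hasDerivAt
    · intro x hx
      have h0 : (0:ℝ) < 1 + x := hpos x hx
      have hd1 : HasDerivAt (fun x : ℝ => 1 + x) 1 x := by
        simpa using (hasDerivAt_id x).const_add 1
      have hlog : HasDerivAt (fun x : ℝ => Real.log (1 + x)) (1 / (1 + x)) x := by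
        exact ((Real.hasDerivAt_log h0.ne').comp x hd1).congr_deriv (by ring)
      have hsq : HasDerivAt (fun x : ℝ => (Real.log (1 + x)) ^ 2)
          (2 * Real.log (1 + x) * (1 / (1 + x))) x := by
        have := hlog.pow 2
        norm_num at this
        exact this.congr_deriv (by ring)
      have := ((hd1.mul hsq).sub ((hd1.const_mul 2).mul hlog)).add (hd1.const_mul 2)
      convert this using 1
      · rfl
      have hc : (1 + x) * (1 / (1 + x)) = 1 := by
        field_simp
      linear_combination ((2:ℝ) - 2 * Real.log (1 + x)) * hc
    · exact (hcont.pow 2).intervalIntegrable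
  have h1u : (1:ℝ) + -u = 1 - u := by ring
  rw [h1, h2, h1u]
  have hune : u ≠ 0 := hu0.ne'
  set a := Real.log (1 + u)
  set b := Real.log (1 - u)
  field_simp
  ring
end

section
/- Let δ_1,…,δ_n be i.i.d. real random variables with |δ_i| ≤ u < 1 almost surely and ρ_i ∈ {1,-1}. Assume Bernstein's inequality: for S_n = Σ ρ_i·log(1+δ_i), P(|S_n - E[S_n]| ≥ t) ≤ 2·exp(-t²/(2(nσ² + ct/3))) for all t > 0, where |log(1+δ_i)| ≤ c and σ² = Var[log(1+δ_i)]. Then for any ζ ∈ [0,1), with probability at least ζ, ∏_{i=1}^n (1+δ_i)^{ρ_i} = 1 + θ with |θ| ≤ exp(t₊ + n|μ|) - 1, where μ = E[log(1+δ_i)] and t₊ = (1/3)·(-c·log((1-ζ)/2) + sqrt(c²·log²((1-ζ)/2) - 18n·log((1-ζ)/2)·σ²)). -/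
open MeasureTheory ProbabilityTheory

/-- Variance-informed backward error analysis (VIBEA).  Let `δ_1,…,δ_n` be
i.i.d. with `|δ_i| ≤ u < 1` a.s., `ρ_i = ±1`, `|log(1+δ_i)| ≤ c` a.s.,
common mean `m = E[log(1+δ_i)]` and variance `σ² = Var[log(1+δ_i)]`, and
assume Bernstein's inequality for `S_n = Σ ρ_i log(1+δ_i)`.  Then for any
`ζ ∈ [0,1)`, with probability at least `ζ`,
`|∏ (1+δ_i)^(ρ_i) - 1| ≤ exp(t₊ + n|m|) - 1`. -/
theorem vibea {Ω : Type*} [MeasurableSpace Ω]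
    (P : Measure Ω) [IsProbabilityMeasure P] (n : ℕ) (hn : 1 ≤ n)
    (u : ℝ) (hu0 : 0 < u) (hu1 : u < 1)
    (δ : Fin n → Ω → ℝ) (hmeas : ∀ i, Measurable (δ i))
    (hindep : iIndepFun δ P)
    (hiid : ∀ i j, IdentDistrib (δ i) (δ j) P P)
    (hbd : ∀ i, ∀ᵐ ω ∂P, |δ i ω| ≤ u)
    (ρ : Fin n → ℤ) (hρ : ∀ i, ρ i = 1 ∨ ρ i = -1)
    (c m σ2 : ℝ) (hc : 0 < c)
    (hcbd : ∀ i, ∀ᵐ ω ∂P, |Real.log (1 + δ i ω)| ≤ c)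
    (hmean : ∀ i, ∫ ω, Real.log (1 + δ i ω) ∂P = m)
    (hvar : ∀ i, variance (fun ω => Real.log (1 + δ i ω)) P = σ2)
    (hBernstein : ∀ t : ℝ, 0 < t →
      P {ω | t ≤ |(∑ i, (ρ i : ℝ) * Real.log (1 + δ i ω)) -
          (∑ i : Fin n, (ρ i : ℝ) * m)|} ≤
        ENNReal.ofReal (2 * Real.exp (-t ^ 2 / (2 * (n * σ2 + c * t / 3)))))
    (ζ : ℝ) (hζ0 : 0 ≤ ζ) (hζ1 : ζ < 1) :
    ENNReal.ofReal ζ ≤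
      P {ω | |(∏ i, (1 + δ i ω) ^ (ρ i)) - 1| ≤
        Real.exp ((1 / 3) * (-c * Real.log ((1 - ζ) / 2) +
          Real.sqrt (c ^ 2 * (Real.log ((1 - ζ) / 2)) ^ 2 -
            18 * n * Real.log ((1 - ζ) / 2) * σ2)) + n * |m|) - 1} := by
  have hζpos : 0 < 1 - ζ := by linarith
  set L := Real.log ((1 - ζ) / 2) with hLdef
  have hLneg : L < 0 := Real.log_neg (by positivity) (by linarith)
  have hσ2 : 0 ≤ σ2 := by
    rw [← hvar ⟨0, hn⟩]; exact variance_nonneg _ _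
  have hn' : (1 : ℝ) ≤ n := by exact_mod_cast hn
  set s := Real.sqrt (c ^ 2 * L ^ 2 - 18 * n * L * σ2) with hsdef
  have hnn : (0:ℝ) ≤ (n:ℝ) * (-L) * σ2 :=
    mul_nonneg (mul_nonneg (Nat.cast_nonneg n) (neg_nonneg.2 hLneg.le)) hσ2
  have harg : 0 ≤ c ^ 2 * L ^ 2 - 18 * n * L * σ2 := by nlinarith [sq_nonneg (c * L)]
  have hs2 : s ^ 2 = c ^ 2 * L ^ 2 - 18 * n * L * σ2 := Real.sq_sqrt harg
  have hs0 : 0 ≤ s := Real.sqrt_nonneg _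
  set t := (1 / 3) * (-c * L + s) with htdef
  have htpos : 0 < t := by
    have : 0 < -c * L := by nlinarith
    nlinarith
  have hD : 0 < n * σ2 + c * t / 3 := by nlinarith
  have hquad : t ^ 2 = -2 * L * (n * σ2 + c * t / 3) := by nlinarith
  have hexp : -t ^ 2 / (2 * (n * σ2 + c * t / 3)) = L := by
    rw [hquad]; field_simp
  have hBern := hBernstein t htpos
  rw [hexp] at hBern
  have h2 : 2 * Real.exp L = 1 - ζ := by
    rw [hLdef, Real.exp_log (by positivity)]; ring
  rw [h2] at hBern
  set M : ℝ := ∑ i : Fin n, (ρ i : ℝ) * m with hMdef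
  set A : Set Ω := {ω | |(∏ i, (1 + δ i ω) ^ (ρ i)) - 1| ≤ Real.exp (t + n * |m|) - 1}
    with hAdef
  -- bound on |M|
  have hM : |M| ≤ n * |m| := by
    calc |M| ≤ ∑ i : Fin n, |(ρ i : ℝ) * m| := Finset.abs_sum_le_sum_abs _ _
    _ = ∑ _i : Fin n, |m| := by
        refine Finset.sum_congr rfl fun i _ => ?_
        rcases hρ i with h | h <;> rw [h] <;> simp
    _ = n * |m| := by simp [mul_comm]
  -- a.e. pointwise implication
  have key : ∀ᵐ ω ∂P,
      |(∑ i, (ρ i : ℝ) * Real.log (1 + δ i ω)) - M| < t → ω ∈ A := by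
    have hbd' : ∀ᵐ ω ∂P, ∀ i, |δ i ω| ≤ u := (ae_all_iff).2 hbd
    filter_upwards [hbd'] with ω hω hlt
    simp only [hAdef, Set.mem_setOf_eq]
    have hpos : ∀ i : Fin n, 0 < 1 + δ i ω := fun i => by
      have := abs_le.1 (hω i); linarith [this.1]
    set S : ℝ := ∑ i, (ρ i : ℝ) * Real.log (1 + δ i ω) with hSdef
    have hprod : (∏ i, (1 + δ i ω) ^ (ρ i)) = Real.exp S := by
      rw [hSdef, Real.exp_sum]
      refine Finset.prod_congr rfl fun i _ => ?_
      rcases hρ i with h | h <;> rw [h] <;>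
        simp [Real.exp_neg, Real.exp_log (hpos i)]
    have hSle : |S| ≤ t + n * |m| := by
      calc |S| ≤ |S - M| + |M| := by
            have := abs_sub_abs_le_abs_sub S M
            have := abs_sub S M
            calc |S| = |(S - M) + M| := by ring_nf
            _ ≤ |S - M| + |M| := abs_add_le _ _
      _ ≤ t + n * |m| := by exact add_le_add hlt.le hM
    rw [hprod]
    have h1 := abs_le.1 hSle
    have e1 := Real.add_one_le_exp S
    have e2 := Real.add_one_le_exp (-S)
    have e3 : Real.exp S ≤ Real.exp (t + n * |m|) := Real.exp_le_exp.2 (le_trans (le_abs_self S) hSle)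
    have e4 : Real.exp (-S) ≤ Real.exp (t + n * |m|) := by
      apply Real.exp_le_exp.2; have := neg_abs_le S; linarith
    rw [abs_le]
    exact ⟨by linarith, by linarith⟩
  -- measure argument
  have hmono : P Aᶜ ≤ ENNReal.ofReal (1 - ζ) := by
    refine le_trans (measure_mono_ae ?_) hBern
    filter_upwards [key] with ω h hA
    by_contra hlt
    exact absurd (h (lt_of_not_ge hlt)) (Set.mem_compl_iff A ω |>.mp hA)
  have hsum : (1 : ENNReal) ≤ P A + P Aᶜ := by
    calc (1 : ENNReal) = P (A ∪ Aᶜ) := by rw [Set.union_compl_self, measure_univ]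
    _ ≤ P A + P Aᶜ := measure_union_le A Aᶜ
  have h5 : ENNReal.ofReal ζ = 1 - ENNReal.ofReal (1 - ζ) := by
    rw [← ENNReal.ofReal_one, ← ENNReal.ofReal_sub _ hζpos.le]
    norm_num
  rw [h5, tsub_le_iff_right]
  exact hsum.trans (add_le_add le_rfl hmono)
end

section
/- Let δ_1,…,δ_n be independent zero-mean random variables with |δ_i| ≤ u < 1 almost surely and ρ_i ∈ {1,-1}. Then for any ζ ∈ [0,1), with probability at least ζ, ∏_{i=1}^n (1+δ_i)^{ρ_i} = 1 + θ with |θ| ≤ exp(t + nu²/(1-u)) - 1, where t = (u/(1-u))·sqrt(-2n·log((1-ζ)/2)). -/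
open MeasureTheory ProbabilityTheory

open Real Set

lemma hoeffding_key (p : ℝ) (hp0 : 0 ≤ p) (hp1 : p ≤ 1) (h : ℝ) :
    (1 - p) * Real.exp (-p * h) + p * Real.exp ((1 - p) * h) ≤ Real.exp (h ^ 2 / 8) := by
  set D : ℝ → ℝ := fun x => 1 - p + p * Real.exp x with hD_def
  have hD : ∀ x, 0 < D x := by
    intro x
    rcases eq_or_lt_of_le hp0 with h0 | h0
    · simp [hD_def, ← h0]
    · have : 0 < p * Real.exp x := mul_pos h0 (Real.exp_pos x)
      have : 0 ≤ 1 - p := by linarith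
      simp only [hD_def]; nlinarith [Real.exp_pos x]
  set q : ℝ → ℝ := fun x => p * Real.exp x / D x with hq_def
  have hq0 : ∀ x, 0 ≤ q x := fun x =>
    div_nonneg (mul_nonneg hp0 (Real.exp_pos x).le) (hD x).le
  have hq1 : ∀ x, q x ≤ 1 := by
    intro x
    rw [hq_def, div_le_one (hD x)]
    simp only [hD_def]; linarith
  have hDder : ∀ x, HasDerivAt D (p * Real.exp x) x := by
    intro x
    exact ((Real.hasDerivAt_exp x).const_mul p).const_add (1 - p)
  have hqder : ∀ x, HasDerivAt q (q x * (1 - q x)) x := by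
    intro x
    have := ((Real.hasDerivAt_exp x).const_mul p).div (hDder x) (hD x).ne'
    refine this.congr_deriv ?_
    have hDx := (hD x).ne'
    rw [show q x = p * Real.exp x / D x from rfl]
    field_simp
  have hqbd : ∀ x, ‖q x * (1 - q x)‖ ≤ 1/4 := by
    intro x
    rw [Real.norm_eq_abs, abs_le]
    constructor
    · nlinarith [hq0 x, hq1 x]
    · nlinarith [sq_nonneg (q x - 1/2)]
  have hlips : ∀ x : ℝ, |q x - q 0| ≤ 1/4 * |x| := by
    intro x
    have := convex_univ.norm_image_sub_le_of_norm_hasDerivWithin_le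
      (f := q) (f' := fun x => q x * (1 - q x)) (C := 1/4)
      (fun y _ => (hqder y).hasDerivWithinAt) (fun y _ => hqbd y)
      (Set.mem_univ 0) (Set.mem_univ x)
    simpa [Real.norm_eq_abs] using this
  have hq_zero : q 0 = p := by simp [hq_def, hD_def]
  set g : ℝ → ℝ := fun x => x ^ 2 / 8 + p * x - Real.log (D x) with hg_def
  have hgder : ∀ x, HasDerivAt g (x / 4 + p - q x) x := by
    intro x
    have h1 : HasDerivAt (fun x : ℝ => x ^ 2 / 8) (x / 4) x := by
      have := (hasDerivAt_pow 2 x).div_const 8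
      refine this.congr_deriv ?_
      rw [show (2:ℕ) - 1 = 1 from rfl]; push_cast; ring
    have h2 : HasDerivAt (fun x : ℝ => p * x) p x := by
      simpa using (hasDerivAt_id x).const_mul p
    have h3 : HasDerivAt (fun x => Real.log (D x)) (q x) x := by
      have := (hDder x).log (hD x).ne'
      simpa [hq_def] using this
    exact (h1.add h2).sub h3
  have hg0 : g 0 = 0 := by simp [hg_def, hD_def]
  have hgnonneg : ∀ x, 0 ≤ g x := by
    intro x
    rcases le_total 0 x with hx | hx
    · have hmono : MonotoneOn g (Ici 0) := by
        apply monotoneOn_of_hasDerivWithinAt_nonneg (convex_Ici 0)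
          (fun y _ => (hgder y).continuousAt.continuousWithinAt)
          (f' := fun y => y / 4 + p - q y)
          (fun y hy => (hgder y).hasDerivWithinAt)
        intro y hy
        rw [interior_Ici] at hy
        have := hlips y
        have hy0 : (0:ℝ) < y := hy
        rw [hq_zero] at this
        rw [abs_of_pos hy0] at this
        have := abs_le.mp this
        linarith [this.2]
      have := hmono (self_mem_Ici) (mem_Ici.mpr hx) hx
      linarith [hg0 ▸ this]
    · have hmono : AntitoneOn g (Iic 0) := by
        apply antitoneOn_of_hasDerivWithinAt_nonpos (convex_Iic 0)
          (fun y _ => (hgder y).continuousAt.continuousWithinAt)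
          (f' := fun y => y / 4 + p - q y)
          (fun y hy => (hgder y).hasDerivWithinAt)
        intro y hy
        rw [interior_Iic] at hy
        have := hlips y
        have hy0 : y < 0 := hy
        rw [hq_zero, abs_of_neg hy0] at this
        have := abs_le.mp this
        linarith [this.1]
      have := hmono (mem_Iic.mpr hx) (self_mem_Iic) hx
      linarith [hg0 ▸ this]
  -- conclude
  have hlog : Real.log (D h) ≤ h ^ 2 / 8 + p * h := by
    have := hgnonneg h; simp only [hg_def] at this; linarith
  have hDh : D h ≤ Real.exp (h ^ 2 / 8 + p * h) := by
    calc D h = Real.exp (Real.log (D h)) := (Real.exp_log (hD h)).symm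
    _ ≤ _ := Real.exp_le_exp.mpr hlog
  have : (1 - p) * Real.exp (-p * h) + p * Real.exp ((1 - p) * h)
      = Real.exp (-p * h) * D h := by
    simp only [hD_def]
    rw [show (1 - p) * h = h + -p * h by ring, Real.exp_add]
    ring
  rw [this]
  calc Real.exp (-p * h) * D h ≤ Real.exp (-p * h) * Real.exp (h ^ 2 / 8 + p * h) := by
        exact mul_le_mul_of_nonneg_left hDh (Real.exp_pos _).le
  _ = Real.exp (h ^ 2 / 8) := by
        rw [← Real.exp_add, show -p * h + (h ^ 2 / 8 + p * h) = h ^ 2 / 8 by ring]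


lemma integrable_of_ae_bound {Ω : Type*} [MeasurableSpace Ω] {μ : Measure Ω}
    [IsFiniteMeasure μ] {f : Ω → ℝ} (hf : AEStronglyMeasurable f μ) {C : ℝ}
    (h : ∀ᵐ ω ∂μ, ‖f ω‖ ≤ C) : Integrable f μ :=
  Integrable.mono' (integrable_const C) hf h

lemma hoeffding_mgf {Ω : Type*} [MeasurableSpace Ω] (μ : Measure Ω) [IsProbabilityMeasure μ]
    {X : Ω → ℝ} (hX : Measurable X) (a b t : ℝ)
    (hab : ∀ᵐ ω ∂μ, X ω ∈ Set.Icc a b) (h0 : ∫ ω, X ω ∂μ = 0) :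
    mgf X μ t ≤ Real.exp (t ^ 2 * (b - a) ^ 2 / 8) := by
  have hXint : Integrable X μ := by
    apply integrable_of_ae_bound hX.aestronglyMeasurable (C := max |a| |b|)
    filter_upwards [hab] with ω hω
    rw [Real.norm_eq_abs, abs_le]
    constructor
    · have := neg_abs_le a; have := le_max_left |a| |b|; linarith [hω.1]
    · have := le_abs_self b; have := le_max_right |a| |b|; linarith [hω.2]
  have ha0 : a ≤ 0 := by
    rw [← h0]
    calc a = ∫ _, a ∂μ := by simp
    _ ≤ ∫ ω, X ω ∂μ := by
        apply integral_mono_ae (integrable_const a) hXint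
        filter_upwards [hab] with ω hω using hω.1
  have hb0 : 0 ≤ b := by
    rw [← h0]
    calc ∫ ω, X ω ∂μ ≤ ∫ _, b ∂μ := by
          apply integral_mono_ae hXint (integrable_const b)
          filter_upwards [hab] with ω hω using hω.2
    _ = b := by simp
  rcases eq_or_lt_of_le (ha0.trans hb0) with hab' | hab'
  · -- a = b = 0
    have ha : a = 0 := le_antisymm ha0 (by linarith)
    have hb : b = 0 := by linarith
    have hmgf : mgf X μ t = 1 := by
      rw [mgf]
      have hx0 : ∀ᵐ ω ∂μ, Real.exp (t * X ω) = 1 := by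
        filter_upwards [hab] with ω hω
        have : X ω = 0 := le_antisymm (hb ▸ hω.2) (ha ▸ hω.1)
        simp [this]
      rw [integral_congr_ae hx0]
      simp
    rw [hmgf, ha, hb]
    simp
  · -- a < b
    set e1 := Real.exp (t * a) with he1
    set e2 := Real.exp (t * b) with he2
    set p : ℝ := -a / (b - a) with hp_def
    have hba : 0 < b - a := sub_pos.mpr hab'
    have hp0 : 0 ≤ p := div_nonneg (by linarith) hba.le
    have hp1 : p ≤ 1 := by rw [div_le_one hba]; linarith
    have key : ∀ x ∈ Set.Icc a b,
        Real.exp (t * x) ≤ ((b * e1 - a * e2) + x * (e2 - e1)) / (b - a) := by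
      intro x hx
      have hθ : 0 ≤ (b - x) / (b - a) := div_nonneg (by linarith [hx.2]) hba.le
      have hθ' : 0 ≤ (x - a) / (b - a) := div_nonneg (by linarith [hx.1]) hba.le
      have hsum : (b - x) / (b - a) + (x - a) / (b - a) = 1 := by field_simp; ring
      have hcvx := convexOn_exp.2 (Set.mem_univ (t * a)) (Set.mem_univ (t * b)) hθ hθ' hsum
      simp only [smul_eq_mul] at hcvx
      have harg : (b - x) / (b - a) * (t * a) + (x - a) / (b - a) * (t * b) = t * x := by
        field_simp; ring
      rw [harg] at hcvx
      calc Real.exp (t * x) ≤ (b - x) / (b - a) * e1 + (x - a) / (b - a) * e2 := hcvx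
      _ = ((b * e1 - a * e2) + x * (e2 - e1)) / (b - a) := by ring
    have hrhs_int : Integrable
        (fun ω => ((b * e1 - a * e2) + X ω * (e2 - e1)) / (b - a)) μ :=
      ((integrable_const _).add (hXint.mul_const _)).div_const _
    have hexp_int : Integrable (fun ω => Real.exp (t * X ω)) μ := by
      apply integrable_of_ae_bound ((hX.const_mul t).exp).aestronglyMeasurable
        (C := Real.exp (|t| * max |a| |b|))
      filter_upwards [hab] with ω hω
      rw [Real.norm_eq_abs, abs_of_pos (Real.exp_pos _), Real.exp_le_exp]
      calc t * X ω ≤ |t * X ω| := le_abs_self _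
      _ = |t| * |X ω| := abs_mul _ _
      _ ≤ |t| * max |a| |b| := by
          apply mul_le_mul_of_nonneg_left _ (abs_nonneg t)
          rw [abs_le]
          constructor
          · have := neg_abs_le a; have := le_max_left |a| |b|; linarith [hω.1]
          · have := le_abs_self b; have := le_max_right |a| |b|; linarith [hω.2]
    have hmgf_le : mgf X μ t ≤ (b * e1 - a * e2) / (b - a) := by
      have h1 : mgf X μ t ≤ ∫ ω, ((b * e1 - a * e2) + X ω * (e2 - e1)) / (b - a) ∂μ := by
        apply integral_mono_ae hexp_int hrhs_int
        filter_upwards [hab] with ω hω using key _ hω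
      have h2 : ∫ ω, ((b * e1 - a * e2) + X ω * (e2 - e1)) / (b - a) ∂μ
          = (b * e1 - a * e2) / (b - a) := by
        rw [integral_div, integral_add (integrable_const _) (hXint.mul_const _),
          integral_mul_const, h0]
        simp
      exact h1.trans_eq h2
    have heq : (b * e1 - a * e2) / (b - a)
        = (1 - p) * Real.exp (-p * (t * (b - a))) + p * Real.exp ((1 - p) * (t * (b - a))) := by
      have h1 : -p * (t * (b - a)) = t * a := by rw [hp_def]; field_simp
      have h2 : (1 - p) * (t * (b - a)) = t * b := by
        have : (1 - p) = b / (b - a) := by rw [hp_def]; field_simp; ring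
        rw [this]; field_simp
      rw [h1, h2, ← he1, ← he2]
      have h3 : (1 - p) = b / (b - a) := by rw [hp_def]; field_simp; ring
      rw [h3, hp_def]
      ring
    calc mgf X μ t ≤ (b * e1 - a * e2) / (b - a) := hmgf_le
    _ = _ := heq
    _ ≤ Real.exp ((t * (b - a)) ^ 2 / 8) := hoeffding_key p hp0 hp1 _
    _ = Real.exp (t ^ 2 * (b - a) ^ 2 / 8) := by rw [mul_pow]


lemma integrable_of_ae_bound' {Ω : Type*} [MeasurableSpace Ω] {μ : Measure Ω}
    [IsFiniteMeasure μ] {f : Ω → ℝ} (hf : AEStronglyMeasurable f μ) {C : ℝ}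
    (h : ∀ᵐ ω ∂μ, ‖f ω‖ ≤ C) : Integrable f μ :=
  Integrable.mono' (integrable_const C) hf h

lemma integrable_of_mem_Icc {Ω : Type*} [MeasurableSpace Ω] {μ : Measure Ω}
    [IsFiniteMeasure μ] {f : Ω → ℝ} (hf : Measurable f) {a b : ℝ}
    (h : ∀ᵐ ω ∂μ, f ω ∈ Set.Icc a b) : Integrable f μ := by
  apply integrable_of_ae_bound' hf.aestronglyMeasurable (C := max |a| |b|)
  filter_upwards [h] with ω hω
  rw [Real.norm_eq_abs, abs_le]
  constructor
  · have := neg_abs_le a; have := le_max_left |a| |b|; linarith [hω.1]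
  · have := le_abs_self b; have := le_max_right |a| |b|; linarith [hω.2]

lemma integrable_exp_of_mem_Icc {Ω : Type*} [MeasurableSpace Ω] {μ : Measure Ω}
    [IsFiniteMeasure μ] {f : Ω → ℝ} (hf : Measurable f) {a b : ℝ} (t : ℝ)
    (h : ∀ᵐ ω ∂μ, f ω ∈ Set.Icc a b) : Integrable (fun ω => Real.exp (t * f ω)) μ := by
  apply integrable_of_ae_bound' ((hf.const_mul t).exp).aestronglyMeasurable
    (C := Real.exp (|t| * max |a| |b|))
  filter_upwards [h] with ω hω
  rw [Real.norm_eq_abs, abs_of_pos (Real.exp_pos _), Real.exp_le_exp]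
  calc t * f ω ≤ |t * f ω| := le_abs_self _
  _ = |t| * |f ω| := abs_mul _ _
  _ ≤ |t| * max |a| |b| := by
      apply mul_le_mul_of_nonneg_left _ (abs_nonneg t)
      rw [abs_le]
      constructor
      · have := neg_abs_le a; have := le_max_left |a| |b|; linarith [hω.1]
      · have := le_abs_self b; have := le_max_right |a| |b|; linarith [hω.2]

/-- Modified mean-informed backward error analysis (MMIBEA).  Let `δ_1,…,δ_n`
be independent zero-mean random variables with `|δ_i| ≤ u < 1` a.s. and
`ρ_i = ±1`.  Then for any `ζ ∈ [0,1)`, with probability at least `ζ`,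
`|∏ (1+δ_i)^(ρ_i) - 1| ≤ exp(t + nu²/(1-u)) - 1`, where
`t = (u/(1-u))·sqrt(-2n·log((1-ζ)/2))`. -/
theorem mmibea {Ω : Type*} [MeasurableSpace Ω]
    (P : Measure Ω) [IsProbabilityMeasure P] (n : ℕ) (hn : 1 ≤ n)
    (u : ℝ) (hu0 : 0 < u) (hu1 : u < 1)
    (δ : Fin n → Ω → ℝ) (hmeas : ∀ i, Measurable (δ i))
    (hindep : iIndepFun δ P)
    (hmean : ∀ i, ∫ ω, δ i ω ∂P = 0)
    (hbd : ∀ i, ∀ᵐ ω ∂P, |δ i ω| ≤ u)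
    (ρ : Fin n → ℤ) (hρ : ∀ i, ρ i = 1 ∨ ρ i = -1)
    (ζ : ℝ) (hζ0 : 0 ≤ ζ) (hζ1 : ζ < 1) :
    ENNReal.ofReal ζ ≤
      P {ω | |(∏ i, (1 + δ i ω) ^ (ρ i)) - 1| ≤
        Real.exp ((u / (1 - u)) * Real.sqrt (-2 * n * Real.log ((1 - ζ) / 2)) +
          n * u ^ 2 / (1 - u)) - 1} := by
  have h1u : (0:ℝ) < 1 - u := by linarith
  have h1u' : (0:ℝ) < 1 + u := by linarith
  set c : ℝ := u / (1 - u) with hc_def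
  have hc : 0 < c := div_pos hu0 h1u
  set la : ℝ := Real.log (1 - u) with hla
  set lb : ℝ := Real.log (1 + u) with hlb
  have hlab : la ≤ lb := Real.log_le_log h1u (by linarith)
  have hw2c : lb - la ≤ 2 * c := by
    have h1 : lb - la = Real.log ((1 + u) / (1 - u)) := (Real.log_div h1u'.ne' h1u.ne').symm
    have h2 : (1 + u) / (1 - u) - 1 = 2 * c := by rw [hc_def]; field_simp; ring
    have h3 := Real.log_le_sub_one_of_pos (div_pos h1u' h1u)
    linarith
  -- the summands and their means
  set phi : Fin n → ℝ → ℝ := fun i x => (ρ i : ℝ) * Real.log (1 + x) with hphi_def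
  have hphi : ∀ i, Measurable (phi i) :=
    fun i => (Real.measurable_log.comp (measurable_const.add measurable_id)).const_mul _
  set Li : Fin n → Ω → ℝ := fun i ω => phi i (δ i ω) with hLi_def
  have hLmeas : ∀ i, Measurable (Li i) := fun i => (hphi i).comp (hmeas i)
  set Ia : Fin n → ℝ := fun i => if ρ i = 1 then la else -lb with hIa_def
  set Ib : Fin n → ℝ := fun i => if ρ i = 1 then lb else -la with hIb_def
  have hIab : ∀ i, Ib i - Ia i = lb - la := by
    intro i
    rcases hρ i with h | h <;> simp [hIa_def, hIb_def, h] <;> ring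
  have hlog_mem : ∀ i, ∀ᵐ ω ∂P, Real.log (1 + δ i ω) ∈ Set.Icc la lb := by
    intro i
    filter_upwards [hbd i] with ω hω
    have h1 := abs_le.mp hω
    constructor
    · exact Real.log_le_log h1u (by linarith [h1.1])
    · exact Real.log_le_log (by linarith [h1.1]) (by linarith [h1.2])
  have hLbd : ∀ i, ∀ᵐ ω ∂P, Li i ω ∈ Set.Icc (Ia i) (Ib i) := by
    intro i
    filter_upwards [hlog_mem i] with ω hω
    rcases hρ i with h | h
    · simpa [hLi_def, hphi_def, hIa_def, hIb_def, h] using hω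
    · simp only [hLi_def, hphi_def, hIa_def, hIb_def, h]
      push_cast
      norm_num
      constructor <;> linarith [hω.1, hω.2]
  have hLint : ∀ i, Integrable (Li i) P := fun i => integrable_of_mem_Icc (hLmeas i) (hLbd i)
  set m : Fin n → ℝ := fun i => ∫ ω, Li i ω ∂P with hm_def
  -- bound on the means
  have hmb : ∀ i, |m i| ≤ u ^ 2 / (1 - u) := by
    intro i
    have hli : Integrable (fun ω => Real.log (1 + δ i ω)) P :=
      integrable_of_mem_Icc (Real.measurable_log.comp
        (measurable_const.add (hmeas i))) (hlog_mem i)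
    have hdi : Integrable (δ i) P := by
      apply integrable_of_mem_Icc (hmeas i) (a := -u) (b := u)
      filter_upwards [hbd i] with ω hω using abs_le.mp hω
    have hcore : |∫ ω, Real.log (1 + δ i ω) ∂P| ≤ u ^ 2 / (1 - u) := by
      have heq : ∫ ω, Real.log (1 + δ i ω) ∂P
          = ∫ ω, (Real.log (1 + δ i ω) - δ i ω) ∂P := by
        rw [integral_sub hli hdi, hmean i, sub_zero]
      rw [heq]
      rw [← Real.norm_eq_abs]
      have hbound : ∀ᵐ ω ∂P, ‖Real.log (1 + δ i ω) - δ i ω‖ ≤ u ^ 2 / (1 - u) := by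
        filter_upwards [hbd i] with ω hω
        rw [Real.norm_eq_abs]
        set d := δ i ω with hd
        have habs : |(-d)| < 1 := by rw [abs_neg]; exact lt_of_le_of_lt hω hu1
        have hkey := Real.abs_log_sub_add_sum_range_le habs 1
        simp only [Finset.range_one, Finset.sum_singleton, pow_one] at hkey
        norm_num at hkey
        have h2 : |Real.log (1 + d) - d| ≤ d ^ 2 / (1 - |d|) := by
          rw [show Real.log (1 + d) - d = -d + Real.log (1 + d) from by ring]
          exact hkey
        calc |Real.log (1 + d) - d| ≤ d ^ 2 / (1 - |d|) := h2
        _ ≤ u ^ 2 / (1 - u) := by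
            apply div_le_div₀ (sq_nonneg u) _ h1u _
            · rw [← sq_abs]; exact pow_le_pow_left₀ (abs_nonneg d) hω 2
            · linarith [abs_le.mp hω]
      calc ‖∫ ω, (Real.log (1 + δ i ω) - δ i ω) ∂P‖
          ≤ ∫ _ω, u ^ 2 / (1 - u) ∂P := norm_integral_le_of_norm_le (integrable_const _) hbound
      _ = u ^ 2 / (1 - u) := by simp
    have hmi : m i = (ρ i : ℝ) * ∫ ω, Real.log (1 + δ i ω) ∂P := by
      rw [hm_def]
      simp only [hLi_def, hphi_def]
      rw [integral_const_mul]
    rcases hρ i with h | h <;> rw [hmi, h] <;> push_cast <;>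
      [skip; rw [neg_one_mul, abs_neg]] <;> simpa using hcore
  -- centered variables
  set Y : Fin n → Ω → ℝ := fun i => (fun x => phi i x - m i) ∘ δ i with hY_def
  have hYmeas : ∀ i, Measurable (Y i) := fun i => ((hphi i).sub measurable_const).comp (hmeas i)
  have hYindep : iIndepFun Y P :=
    hindep.comp _ (fun i => (hphi i).sub measurable_const)
  have hYbd : ∀ i, ∀ᵐ ω ∂P, Y i ω ∈ Set.Icc (Ia i - m i) (Ib i - m i) := by
    intro i
    filter_upwards [hLbd i] with ω hω
    exact ⟨by simpa [hY_def] using sub_le_sub_right hω.1 (m i),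
      by simpa [hY_def] using sub_le_sub_right hω.2 (m i)⟩
  have hYmean : ∀ i, ∫ ω, Y i ω ∂P = 0 := by
    intro i
    have : ∫ ω, Y i ω ∂P = ∫ ω, (Li i ω - m i) ∂P := rfl
    rw [this, integral_sub (hLint i) (integrable_const _), integral_const]
    simp [hm_def]
  -- mgf bound for each Y i
  have hYmgf : ∀ i, ∀ lam : ℝ, mgf (Y i) P lam ≤ Real.exp (lam ^ 2 * c ^ 2 / 2) := by
    intro i lam
    have h1 := hoeffding_mgf P (hYmeas i) (Ia i - m i) (Ib i - m i) lam (hYbd i) (hYmean i)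
    have h2 : Ib i - m i - (Ia i - m i) = lb - la := by rw [sub_sub_sub_cancel_right]; exact hIab i
    rw [h2] at h1
    apply h1.trans
    rw [Real.exp_le_exp]
    have h3 : (lb - la) ^ 2 ≤ 4 * c ^ 2 := by nlinarith [sub_nonneg.mpr hlab]
    nlinarith [sq_nonneg lam, mul_le_mul_of_nonneg_left h3 (sq_nonneg lam)]
  -- the sum
  set Z : Ω → ℝ := ∑ i, Y i with hZ_def
  have hZapp : ∀ ω, Z ω = ∑ i, Y i ω := by
    intro ω; rw [hZ_def]; exact Finset.sum_apply ω Finset.univ Y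
  have hZmeas : Measurable Z := by
    have h := Finset.measurable_sum (f := Y) Finset.univ (fun i _ => hYmeas i)
    have he : Z = fun a => ∑ i, Y i a := funext hZapp
    rw [he]; exact h
  have hexpint : ∀ lam : ℝ, Integrable (fun ω => Real.exp (lam * Z ω)) P := by
    intro lam
    exact hYindep.integrable_exp_mul_sum hYmeas
      (fun i _ => integrable_exp_of_mem_Icc (hYmeas i) lam (hYbd i))
  have hZmgf : ∀ lam : ℝ, mgf Z P lam ≤ Real.exp (n * (lam ^ 2 * c ^ 2 / 2)) := by
    intro lam
    rw [hZ_def, hYindep.mgf_sum hYmeas Finset.univ]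
    calc ∏ i, mgf (Y i) P lam ≤ ∏ _i : Fin n, Real.exp (lam ^ 2 * c ^ 2 / 2) :=
          Finset.prod_le_prod (fun i _ => mgf_nonneg) (fun i _ => hYmgf i lam)
    _ = Real.exp (n * (lam ^ 2 * c ^ 2 / 2)) := by
        rw [Finset.prod_const, Finset.card_univ, Fintype.card_fin, ← Real.exp_nat_mul]
  -- the threshold
  set L0 : ℝ := Real.log ((1 - ζ) / 2) with hL0_def
  have hhalf : 0 < (1 - ζ) / 2 := by linarith
  have hL0 : L0 < 0 := Real.log_neg hhalf (by linarith)
  have hn' : (0:ℝ) < n := by exact_mod_cast hn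
  have harg : 0 < -2 * n * L0 := by nlinarith
  set t0 : ℝ := c * Real.sqrt (-2 * n * L0) with ht0_def
  have ht0 : 0 < t0 := mul_pos hc (Real.sqrt_pos.mpr harg)
  have ht0sq : t0 ^ 2 = c ^ 2 * (-2 * n * L0) := by
    rw [ht0_def, mul_pow, Real.sq_sqrt harg.le]
  set lam0 : ℝ := t0 / (n * c ^ 2) with hlam0_def
  have hnc : (0:ℝ) < n * c ^ 2 := by positivity
  have hlam0 : 0 ≤ lam0 := le_of_lt (div_pos ht0 hnc)
  have hexpo : -lam0 * t0 + n * (lam0 ^ 2 * c ^ 2 / 2) = L0 := by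
    have hstep : -lam0 * t0 + n * (lam0 ^ 2 * c ^ 2 / 2) = -(t0 ^ 2) / (2 * (n * c ^ 2)) := by
      rw [hlam0_def]; field_simp; ring
    rw [hstep, ht0sq]
    field_simp
  -- the two tails
  have htail : ∀ s : Set Ω, (P s).toReal ≤ Real.exp (-lam0 * t0) * Real.exp (n * (lam0 ^ 2 * c ^ 2 / 2)) → P s ≤ ENNReal.ofReal ((1 - ζ) / 2) := by
    intro s hs
    rw [ENNReal.le_ofReal_iff_toReal_le (measure_ne_top P s) hhalf.le]
    apply hs.trans
    rw [← Real.exp_add, hexpo, Real.exp_log hhalf]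
  have hup : P {ω | t0 ≤ Z ω} ≤ ENNReal.ofReal ((1 - ζ) / 2) := by
    apply htail
    calc (P {ω | t0 ≤ Z ω}).toReal ≤ Real.exp (-lam0 * t0) * mgf Z P lam0 :=
          measure_ge_le_exp_mul_mgf t0 hlam0 (hexpint lam0)
    _ ≤ _ := mul_le_mul_of_nonneg_left (hZmgf lam0) (Real.exp_pos _).le
  have hlo : P {ω | Z ω ≤ -t0} ≤ ENNReal.ofReal ((1 - ζ) / 2) := by
    apply htail
    calc (P {ω | Z ω ≤ -t0}).toReal ≤ Real.exp (-(-lam0) * -t0) * mgf Z P (-lam0) :=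
          measure_le_le_exp_mul_mgf (-t0) (neg_nonpos.mpr hlam0) (hexpint (-lam0))
    _ ≤ _ := by
        rw [show -(-lam0) * -t0 = -lam0 * t0 by ring]
        apply mul_le_mul_of_nonneg_left _ (Real.exp_pos _).le
        have := hZmgf (-lam0)
        rwa [neg_pow, show ((-1:ℝ))^2 = 1 by norm_num, one_mul] at this
  -- the event
  set A : Set Ω := {ω | |Z ω| ≤ t0} with hA_def
  have hAmeas : MeasurableSet A := measurableSet_le (hZmeas.abs) measurable_const
  have hcompl : P Aᶜ ≤ ENNReal.ofReal (1 - ζ) := by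
    have hsub : Aᶜ ⊆ {ω | t0 ≤ Z ω} ∪ {ω | Z ω ≤ -t0} := by
      intro ω hω
      simp only [hA_def, Set.mem_compl_iff, Set.mem_setOf_eq, not_le] at hω
      rcases lt_abs.mp hω with h | h
      · exact Or.inl h.le
      · exact Or.inr (show Z ω ≤ -t0 by linarith)
    calc P Aᶜ ≤ P ({ω | t0 ≤ Z ω} ∪ {ω | Z ω ≤ -t0}) := measure_mono hsub
    _ ≤ P {ω | t0 ≤ Z ω} + P {ω | Z ω ≤ -t0} := measure_union_le _ _
    _ ≤ ENNReal.ofReal ((1 - ζ) / 2) + ENNReal.ofReal ((1 - ζ) / 2) := add_le_add hup hlo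
    _ = ENNReal.ofReal (1 - ζ) := by
        rw [← ENNReal.ofReal_add hhalf.le hhalf.le]; norm_num
  have hA_lb : ENNReal.ofReal ζ ≤ P A := by
    have h1 : P A = 1 - P Aᶜ := by rw [← prob_compl_eq_one_sub hAmeas.compl, compl_compl]
    rw [h1]
    have h2 : ENNReal.ofReal ζ = 1 - ENNReal.ofReal (1 - ζ) := by
      rw [← ENNReal.ofReal_one, ← ENNReal.ofReal_sub _ (by linarith : (0:ℝ) ≤ 1 - ζ)]
      norm_num
    rw [h2]
    exact tsub_le_tsub_left hcompl 1
  -- conclude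
  refine hA_lb.trans (measure_mono_ae ?_)
  have hae : ∀ᵐ ω ∂P, ∀ i, |δ i ω| ≤ u := ae_all_iff.mpr hbd
  filter_upwards [hae] with ω hω hmem
  have hmem' : |Z ω| ≤ t0 := hmem
  have hpos_i : ∀ i, 0 < 1 + δ i ω := fun i => by
    have := abs_le.mp (hω i); linarith [this.1]
  set S : ℝ := ∑ i, Li i ω with hS_def
  have hprod : (∏ i, (1 + δ i ω) ^ (ρ i)) = Real.exp S := by
    rw [hS_def, Real.exp_sum]
    apply Finset.prod_congr rfl
    intro i _
    rcases hρ i with h | h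
    · simp only [hLi_def, hphi_def, h]
      push_cast
      rw [one_mul, Real.exp_log (hpos_i i), zpow_one]
    · simp only [hLi_def, hphi_def, h]
      push_cast
      rw [neg_one_mul, Real.exp_neg, Real.exp_log (hpos_i i), zpow_neg_one]
  have hZS : Z ω = S - ∑ i, m i := by
    rw [hZapp, hS_def, ← Finset.sum_sub_distrib]
    rfl
  have hMsum : |∑ i, m i| ≤ n * (u ^ 2 / (1 - u)) := by
    calc |∑ i, m i| ≤ ∑ i, |m i| := Finset.abs_sum_le_sum_abs _ _
    _ ≤ ∑ _i : Fin n, u ^ 2 / (1 - u) := Finset.sum_le_sum (fun i _ => hmb i)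
    _ = n * (u ^ 2 / (1 - u)) := by
        rw [Finset.sum_const, Finset.card_univ, Fintype.card_fin, nsmul_eq_mul]
  set Bd : ℝ := t0 + n * u ^ 2 / (1 - u) with hBd_def
  have hSB : |S| ≤ Bd := by
    have : S = Z ω + ∑ i, m i := by rw [hZS]; ring
    rw [this, hBd_def]
    calc |Z ω + ∑ i, m i| ≤ |Z ω| + |∑ i, m i| := abs_add_le _ _
    _ ≤ t0 + n * (u ^ 2 / (1 - u)) := add_le_add hmem' hMsum
    _ = t0 + n * u ^ 2 / (1 - u) := by ring
  show |(∏ i, (1 + δ i ω) ^ (ρ i)) - 1| ≤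
      Real.exp ((u / (1 - u)) * Real.sqrt (-2 * n * Real.log ((1 - ζ) / 2)) +
        n * u ^ 2 / (1 - u)) - 1
  have hBd_eq : (u / (1 - u)) * Real.sqrt (-2 * n * Real.log ((1 - ζ) / 2)) +
      n * u ^ 2 / (1 - u) = Bd := by
    rw [hBd_def, ht0_def, hL0_def, hc_def]
  rw [hprod, hBd_eq]
  have hSB' := abs_le.mp hSB
  rcases le_or_gt 0 S with hS0 | hS0
  · rw [abs_of_nonneg (by linarith [Real.one_le_exp hS0] : (0:ℝ) ≤ Real.exp S - 1)]
    have := Real.exp_le_exp.mpr hSB'.2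
    linarith
  · rw [abs_of_nonpos (by
      have : Real.exp S < 1 := Real.exp_lt_one_iff.mpr hS0
      linarith : Real.exp S - 1 ≤ 0)]
    have h1 : Real.exp (-S) ≤ Real.exp Bd := Real.exp_le_exp.mpr (by linarith [hSB'.1])
    have h2 : 2 ≤ Real.exp S + Real.exp (-S) := by
      have := Real.add_one_le_exp S
      have := Real.add_one_le_exp (-S)
      linarith
    linarith
end
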